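/- G_PNI(X→Y) = 0 if and only if G_NNI(X;Y) = 0; equivalently, if there exists an auxiliary U with I(X;Y|U) > I(X;Y), then there exists an auxiliary U′ independent of X with I(X;Y|U′) > I(X;Y). -/

import Mathlib

open scoped BigOperators Pointwise Classical

noncomputable section

namespace GW

/-- A probability mass function on a finite type. -/
def IsPMF {α : Type} [Fintype α] (p : α → ℝ) : Prop :=
  (∀ a, 0 ≤ p a) ∧ ∑ a, p a = 1

/-- Distribution (pmf) of the random variable `f` under the pmf `p`. -/
def dist {α β : Type} [Fintype α] (p : α → ℝ) (f : α → β) : β → ℝ :=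
  fun b => ∑ a, if f a = b then p a else 0

/-- Shannon entropy (base 2) of the random variable `f` under the pmf `p`. -/
def H {α β : Type} [Fintype α] [Fintype β] (p : α → ℝ) (f : α → β) : ℝ :=
  ∑ b, -(dist p f b * Real.logb 2 (dist p f b))

/-- Mutual information `I(f; g)` under `p`. -/
def I2 {α β γ : Type} [Fintype α] [Fintype β] [Fintype γ]
    (p : α → ℝ) (f : α → β) (g : α → γ) : ℝ :=
  H p f + H p g - H p (fun a => (f a, g a))

/-- Conditional entropy `H(f | g)` under `p`. -/
def Hc {α β γ : Type} [Fintype α] [Fintype β] [Fintype γ]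
    (p : α → ℝ) (f : α → β) (g : α → γ) : ℝ :=
  H p (fun a => (f a, g a)) - H p g

/-- Conditional mutual information `I(f; g | h)` under `p`. -/
def Ic {α β γ δ : Type} [Fintype α] [Fintype β] [Fintype γ] [Fintype δ]
    (p : α → ℝ) (f : α → β) (g : α → γ) (h : α → δ) : ℝ :=
  Hc p f h + Hc p g h - Hc p (fun a => (f a, g a)) h

/-- Independence of the random variables `f` and `g` under `p`. -/
def Indep {α β γ : Type} [Fintype α] (p : α → ℝ) (f : α → β) (g : α → γ) : Prop :=
  ∀ b c, dist p (fun a => (f a, g a)) (b, c) = dist p f b * dist p g c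

/-- `q` is a joint pmf on `X × Y × U` whose `(X,Y)`-marginal is `p`; i.e. `U` is an
auxiliary random variable defined jointly with `(X,Y)` via a conditional pmf `p_{U|XY}`. -/
def IsAux {X Y U : Type} [Fintype X] [Fintype Y] [Fintype U]
    (p : X × Y → ℝ) (q : X × Y × U → ℝ) : Prop :=
  IsPMF q ∧ ∀ x y, (∑ u, q (x, y, u)) = p (x, y)

/-- Coordinate map onto `X`. -/
def cX {X Y U : Type} : X × Y × U → X := fun a => a.1
/-- Coordinate map onto `Y`. -/
def cY {X Y U : Type} : X × Y × U → Y := fun a => a.2.1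
/-- Coordinate map onto `U`. -/
def cU {X Y U : Type} : X × Y × U → U := fun a => a.2.2
/-- Coordinate map onto `X × Y`. -/
def cXY {X Y U : Type} : X × Y × U → X × Y := fun a => (a.1, a.2.1)

/-- The mutual information region `𝓘_{XY}`. -/
def MIRegion {X Y : Type} [Fintype X] [Fintype Y] (p : X × Y → ℝ) : Set (ℝ × ℝ × ℝ) :=
  { v | ∃ (U : Type) (_ : Fintype U) (q : X × Y × U → ℝ), IsAux p q ∧
      v = (I2 q cX cU, I2 q cY cU, I2 q cXY cU) }

/-- The outer region `𝓘ᵒ_{XY}`. -/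
def OuterRegion {X Y : Type} [Fintype X] [Fintype Y] (p : X × Y → ℝ) : Set (ℝ × ℝ × ℝ) :=
  { v | 0 ≤ v.1 ∧ 0 ≤ v.2.1 ∧ v.1 + v.2.1 - v.2.2 ≤ I2 p Prod.fst Prod.snd ∧
        0 ≤ v.2.2 - v.2.1 ∧ v.2.2 - v.2.1 ≤ Hc p Prod.fst Prod.snd ∧
        0 ≤ v.2.2 - v.1 ∧ v.2.2 - v.1 ≤ Hc p Prod.snd Prod.fst }

/-- Maximal interaction information `G_NNI(X; Y)`. -/
def GNNI {X Y : Type} [Fintype X] [Fintype Y] (p : X × Y → ℝ) : ℝ :=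
  sSup { r | ∃ (U : Type) (_ : Fintype U) (q : X × Y × U → ℝ), IsAux p q ∧
      r = Ic q cX cY cU - I2 p Prod.fst Prod.snd }

/-- Asymmetric private interaction information `G_PNI(X → Y)`. -/
def GPNI {X Y : Type} [Fintype X] [Fintype Y] (p : X × Y → ℝ) : ℝ :=
  sSup { r | ∃ (U : Type) (_ : Fintype U) (q : X × Y × U → ℝ), IsAux p q ∧
      Indep q cU cX ∧ r = Ic q cX cY cU - I2 p Prod.fst Prod.snd }

/-- Symmetric private interaction information `G_PPI(X; Y)`. -/
def GPPI {X Y : Type} [Fintype X] [Fintype Y] (p : X × Y → ℝ) : ℝ :=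
  sSup { r | ∃ (U : Type) (_ : Fintype U) (q : X × Y × U → ℝ), IsAux p q ∧
      Indep q cU cX ∧ Indep q cU cY ∧ r = Ic q cX cY cU - I2 p Prod.fst Prod.snd }


/-! ### Auxiliary lemmas -/

section Toolkit

set_option linter.unusedSectionVars false

variable {α β γ : Type} [Fintype α] [Fintype β] [Fintype γ]

lemma dist_nonneg' (p : α → ℝ) (hp : ∀ a, 0 ≤ p a) (f : α → β) (b : β) :
    0 ≤ dist p f b := by
  unfold dist
  exact Finset.sum_nonneg fun a _ => by split <;> [exact hp a; exact le_rfl]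

lemma sum_dist (p : α → ℝ) (f : α → β) : ∑ b, dist p f b = ∑ a, p a := by
  unfold dist
  rw [Finset.sum_comm]
  refine Finset.sum_congr rfl fun a _ => ?_
  simp

lemma single_le_dist (p : α → ℝ) (hp : ∀ a, 0 ≤ p a) (f : α → β) (a : α) :
    p a ≤ dist p f (f a) := by
  unfold dist
  have := Finset.single_le_sum (f := fun a' => if f a' = f a then p a' else 0)
    (fun a' _ => by split <;> [exact hp a'; exact le_rfl]) (Finset.mem_univ a)
  simpa using this

lemma dist_pos (p : α → ℝ) (hp : ∀ a, 0 ≤ p a) (f : α → β) (a : α) (ha : p a ≠ 0) :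
    0 < dist p f (f a) :=
  lt_of_lt_of_le (lt_of_le_of_ne (hp a) (Ne.symm ha)) (single_le_dist p hp f a)

lemma dist_congr (p : α → ℝ) (f : α → β) (g : α → γ) (b : β) (c : γ)
    (h : ∀ a, p a ≠ 0 → (f a = b ↔ g a = c)) :
    dist p f b = dist p g c := by
  unfold dist
  refine Finset.sum_congr rfl fun a _ => ?_
  by_cases hpa : p a = 0
  · simp [hpa]
  · rw [h a hpa]

lemma dist_le_of_imp (p : α → ℝ) (hp : ∀ a, 0 ≤ p a) (f : α → β) (g : α → γ) (b : β) (c : γ)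
    (h : ∀ a, f a = b → g a = c) :
    dist p f b ≤ dist p g c := by
  unfold dist
  refine Finset.sum_le_sum fun a _ => ?_
  by_cases hab : f a = b
  · rw [if_pos hab, if_pos (h a hab)]
  · rw [if_neg hab]
    split <;> [exact hp a; exact le_rfl]

lemma dist_apply_inj (p : α → ℝ) (f : α → β) (a : α)
    (h : ∀ a', f a' = f a → a' = a) :
    dist p f (f a) = p a := by
  unfold dist
  rw [Finset.sum_eq_single a]
  · simp
  · intro a' _ ha'
    rw [if_neg fun hc => ha' (h a' hc)]
  · simp

/-- Pointwise form of the entropy. -/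
lemma H_eq_sum (p : α → ℝ) (f : α → β) :
    H p f = ∑ a, -(p a * Real.logb 2 (dist p f (f a))) := by
  unfold H
  have : ∀ b, -(dist p f b * Real.logb 2 (dist p f b)) =
      ∑ a, (if f a = b then -(p a * Real.logb 2 (dist p f b)) else 0) := by
    intro b
    have h2 : (∑ a, if f a = b then -(p a * Real.logb 2 (dist p f b)) else 0)
        = -∑ a, (if f a = b then p a else 0) * Real.logb 2 (dist p f b) := by
      rw [← Finset.sum_neg_distrib]
      refine Finset.sum_congr rfl fun a _ => ?_
      split <;> simp
    rw [h2]
    congr 1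
    rw [← Finset.sum_mul]
    rfl
  rw [Finset.sum_congr rfl fun b _ => this b, Finset.sum_comm]
  refine Finset.sum_congr rfl fun a _ => ?_
  simp

/-- Entropy only depends on the partition induced on the support. -/
lemma H_congr (p : α → ℝ) (f : α → β) (g : α → γ)
    (h : ∀ a, p a ≠ 0 → ∀ a', p a' ≠ 0 → (f a' = f a ↔ g a' = g a)) :
    H p f = H p g := by
  rw [H_eq_sum, H_eq_sum]
  refine Finset.sum_congr rfl fun a _ => ?_
  by_cases hpa : p a = 0
  · simp [hpa]
  · rw [dist_congr p f g (f a) (g a) (fun a' ha' => h a hpa a' ha')]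

lemma H_eq_of_dist_eq {α' : Type} [Fintype α'] (p : α → ℝ) (p' : α' → ℝ)
    (f : α → β) (f' : α' → β) (h : ∀ b, dist p f b = dist p' f' b) :
    H p f = H p' f' := by
  unfold H
  exact Finset.sum_congr rfl fun b _ => by rw [h b]

lemma sum_dist_mul (p : α → ℝ) (f : α → β) (ψ : β → ℝ) :
    ∑ b, dist p f b * ψ b = ∑ a, p a * ψ (f a) := by
  unfold dist
  have : ∀ b, (∑ a, if f a = b then p a else 0) * ψ b
      = ∑ a, (if f a = b then p a * ψ b else 0) := by
    intro b
    rw [Finset.sum_mul]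
    refine Finset.sum_congr rfl fun a _ => ?_
    split <;> simp
  rw [Finset.sum_congr rfl fun b _ => this b, Finset.sum_comm]
  refine Finset.sum_congr rfl fun a _ => ?_
  simp

lemma gibbs_key (a b : α → ℝ) (ha : ∀ i, 0 ≤ a i) (hb : ∀ i, 0 ≤ b i)
    (hba : ∀ i, b i = 0 → a i = 0) (i : α) :
    a i * Real.log (b i / a i) ≤ b i - a i := by
  rcases eq_or_lt_of_le (ha i) with h0 | hpos
  · rw [← h0]
    simpa using hb i
  · have hbi : 0 < b i := by
      rcases eq_or_lt_of_le (hb i) with h0' | h' 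
      · exact absurd (hba i h0'.symm) (ne_of_gt hpos)
      · exact h'
    have h1 := Real.log_le_sub_one_of_pos (div_pos hbi hpos)
    have h2 := mul_le_mul_of_nonneg_left h1 hpos.le
    calc a i * Real.log (b i / a i) ≤ a i * (b i / a i - 1) := h2
      _ = b i - a i := by field_simp

lemma logb_sum_eq (a c : α → ℝ) :
    ∑ i, a i * Real.logb 2 (c i) = (∑ i, a i * Real.log (c i)) / Real.log 2 := by
  rw [Finset.sum_div]
  refine Finset.sum_congr rfl fun i _ => ?_
  rw [Real.logb, mul_div_assoc']

/-- Gibbs' inequality. -/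
lemma gibbs_le (a b : α → ℝ) (ha : ∀ i, 0 ≤ a i) (hb : ∀ i, 0 ≤ b i)
    (hba : ∀ i, b i = 0 → a i = 0) (hs : ∑ i, b i ≤ ∑ i, a i) :
    ∑ i, a i * Real.logb 2 (b i / a i) ≤ 0 := by
  rw [logb_sum_eq]
  apply div_nonpos_of_nonpos_of_nonneg _ (Real.log_pos one_lt_two).le
  have := Finset.sum_le_sum (s := Finset.univ) (fun i _ => gibbs_key a b ha hb hba i)
  rw [Finset.sum_sub_distrib] at this
  linarith

/-- Strict Gibbs' inequality. -/
lemma gibbs_lt (a b : α → ℝ) (ha : ∀ i, 0 ≤ a i) (hb : ∀ i, 0 ≤ b i)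
    (hba : ∀ i, b i = 0 → a i = 0) (hs : ∑ i, b i ≤ ∑ i, a i)
    (i₀ : α) (hi₀ : a i₀ ≠ 0) (hne : a i₀ ≠ b i₀) :
    ∑ i, a i * Real.logb 2 (b i / a i) < 0 := by
  rw [logb_sum_eq]
  apply div_neg_of_neg_of_pos _ (Real.log_pos one_lt_two)
  have hpos : 0 < a i₀ := lt_of_le_of_ne (ha i₀) (Ne.symm hi₀)
  have hbi : 0 < b i₀ := by
    rcases eq_or_lt_of_le (hb i₀) with h0' | h'
    · exact absurd (hba i₀ h0'.symm) hi₀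
    · exact h'
  have hkey : a i₀ * Real.log (b i₀ / a i₀) < b i₀ - a i₀ := by
    have hd1 : b i₀ / a i₀ ≠ 1 := by
      intro h
      rw [div_eq_one_iff_eq hi₀] at h
      exact hne h.symm
    have h1 := Real.log_lt_sub_one_of_pos (div_pos hbi hpos) hd1
    have h2 := mul_lt_mul_of_pos_left h1 hpos
    calc a i₀ * Real.log (b i₀ / a i₀) < a i₀ * (b i₀ / a i₀ - 1) := h2
      _ = b i₀ - a i₀ := by field_simp
  have := Finset.sum_lt_sum (fun i _ => gibbs_key a b ha hb hba i)
    ⟨i₀, Finset.mem_univ i₀, hkey⟩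
  rw [Finset.sum_sub_distrib] at this
  linarith

lemma dist_pair_le_fst (p : α → ℝ) (hp : ∀ a, 0 ≤ p a) (f : α → β) (g : α → γ) (b : β) (c : γ) :
    dist p (fun a => (f a, g a)) (b, c) ≤ dist p f b :=
  dist_le_of_imp p hp _ f (b, c) b fun a h => congrArg Prod.fst h

lemma dist_pair_le_snd (p : α → ℝ) (hp : ∀ a, 0 ≤ p a) (f : α → β) (g : α → γ) (b : β) (c : γ) :
    dist p (fun a => (f a, g a)) (b, c) ≤ dist p g c :=
  dist_le_of_imp p hp _ g (b, c) c fun a h => congrArg Prod.snd h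

/-- Entropy decreases under maps (data processing). -/
lemma H_comp_le (p : α → ℝ) (hp : ∀ a, 0 ≤ p a) (f : α → β) (g : β → γ) :
    H p (fun a => g (f a)) ≤ H p f := by
  rw [H_eq_sum, H_eq_sum]
  refine Finset.sum_le_sum fun a _ => ?_
  by_cases hpa : p a = 0
  · simp [hpa]
  · have h1 : 0 < dist p f (f a) := dist_pos p hp f a hpa
    have h2 : dist p f (f a) ≤ dist p (fun a => g (f a)) (g (f a)) :=
      dist_le_of_imp p hp f _ (f a) (g (f a)) fun a' h => by rw [h]
    have h3 := Real.logb_le_logb_of_le (b := 2) (by norm_num) h1 h2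
    have hpos : 0 < p a := lt_of_le_of_ne (hp a) (Ne.symm hpa)
    nlinarith

/-- Subadditivity of entropy. -/
lemma H_pair_le_add (p : α → ℝ) (hp : ∀ a, 0 ≤ p a) (hsum : ∑ a, p a = 1)
    (f : α → β) (g : α → γ) :
    H p (fun a => (f a, g a)) ≤ H p f + H p g := by
  set F := fun a => (f a, g a) with hF
  have key : H p f + H p g - H p F =
      ∑ bc : β × γ, dist p F bc *
        (Real.logb 2 (dist p F bc) - Real.logb 2 (dist p f bc.1) - Real.logb 2 (dist p g bc.2)) := by
    rw [H_eq_sum, H_eq_sum, H_eq_sum, sum_dist_mul p F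
      (fun bc => Real.logb 2 (dist p F bc) - Real.logb 2 (dist p f bc.1)
        - Real.logb 2 (dist p g bc.2))]
    rw [← Finset.sum_add_distrib, ← Finset.sum_sub_distrib]
    refine Finset.sum_congr rfl fun a _ => ?_
    simp only [hF]
    ring
  have key2 : ∑ bc : β × γ, dist p F bc *
      (Real.logb 2 (dist p F bc) - Real.logb 2 (dist p f bc.1) - Real.logb 2 (dist p g bc.2))
      = -∑ bc : β × γ, dist p F bc *
          Real.logb 2 ((dist p f bc.1 * dist p g bc.2) / dist p F bc) := by
    rw [← Finset.sum_neg_distrib]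
    refine Finset.sum_congr rfl fun bc _ => ?_
    by_cases h0 : dist p F bc = 0
    · simp [h0]
    · have hF0 : 0 < dist p F bc := lt_of_le_of_ne (dist_nonneg' p hp F bc) (Ne.symm h0)
      have hf0 : 0 < dist p f bc.1 := lt_of_lt_of_le hF0 (dist_pair_le_fst p hp f g bc.1 bc.2)
      have hg0 : 0 < dist p g bc.2 := lt_of_lt_of_le hF0 (dist_pair_le_snd p hp f g bc.1 bc.2)
      rw [Real.logb_div (by positivity) h0, Real.logb_mul hf0.ne' hg0.ne']
      ring
  have hg := gibbs_le (fun bc => dist p F bc)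
      (fun bc : β × γ => dist p f bc.1 * dist p g bc.2)
      (fun bc => dist_nonneg' p hp F bc)
      (fun bc => mul_nonneg (dist_nonneg' p hp f bc.1) (dist_nonneg' p hp g bc.2))
      (fun bc hz => by
        rcases mul_eq_zero.1 hz with h | h
        · exact le_antisymm (h ▸ dist_pair_le_fst p hp f g bc.1 bc.2)
            (dist_nonneg' p hp F bc)
        · exact le_antisymm (h ▸ dist_pair_le_snd p hp f g bc.1 bc.2)
            (dist_nonneg' p hp F bc))
      (by
        apply le_of_eq
        rw [Fintype.sum_prod_type, sum_dist p F, hsum]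
        calc ∑ b, ∑ c, dist p f b * dist p g c
            = (∑ b, dist p f b) * (∑ c, dist p g c) := by
              rw [Finset.sum_mul]
              exact Finset.sum_congr rfl fun b _ => by rw [Finset.mul_sum]
          _ = 1 := by rw [sum_dist p f, sum_dist p g, hsum, one_mul])
  have hg2 : ∑ bc : β × γ, dist p F bc *
      Real.logb 2 (dist p f bc.1 * dist p g bc.2 / dist p F bc) ≤ 0 := hg
  linarith [key, key2]

/-- Entropy is additive for independent random variables. -/
lemma H_indep_add (p : α → ℝ) (hsum : ∑ a, p a = 1) (f : α → β) (g : α → γ)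
    (hI : ∀ b c, dist p (fun a => (f a, g a)) (b, c) = dist p f b * dist p g c) :
    H p (fun a => (f a, g a)) = H p f + H p g := by
  have key : ∀ s t : ℝ, -(s * t * Real.logb 2 (s * t)) =
      t * -(s * Real.logb 2 s) + s * -(t * Real.logb 2 t) := by
    intro s t
    by_cases hs : s = 0
    · simp [hs]
    by_cases ht : t = 0
    · simp [ht]
    rw [Real.logb_mul hs ht]
    ring
  unfold H
  rw [Fintype.sum_prod_type]
  have : ∀ b c, -(dist p (fun a => (f a, g a)) (b, c) *
        Real.logb 2 (dist p (fun a => (f a, g a)) (b, c))) =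
      dist p g c * -(dist p f b * Real.logb 2 (dist p f b)) +
        dist p f b * -(dist p g c * Real.logb 2 (dist p g c)) := by
    intro b c
    rw [hI b c]
    exact key _ _
  calc ∑ b, ∑ c, -(dist p (fun a => (f a, g a)) (b, c) *
        Real.logb 2 (dist p (fun a => (f a, g a)) (b, c)))
      = ∑ b, ∑ c, (dist p g c * -(dist p f b * Real.logb 2 (dist p f b)) +
          dist p f b * -(dist p g c * Real.logb 2 (dist p g c))) := by
        exact Finset.sum_congr rfl fun b _ => Finset.sum_congr rfl fun c _ => this b c
    _ = ∑ b, ((∑ c, dist p g c) * -(dist p f b * Real.logb 2 (dist p f b)) +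
          dist p f b * ∑ c, -(dist p g c * Real.logb 2 (dist p g c))) := by
        refine Finset.sum_congr rfl fun b _ => ?_
        rw [Finset.sum_add_distrib, Finset.sum_mul, Finset.mul_sum]
    _ = H p f + H p g := by
        unfold H
        rw [Finset.sum_add_distrib]
        congr 1
        · rw [sum_dist p g, hsum]
          simp
        · rw [← Finset.sum_mul, sum_dist p f, hsum, one_mul]

end Toolkit

section Marginals

set_option linter.unusedSectionVars false

variable {X Y U : Type} [Fintype X] [Fintype Y] [Fintype U]
  (p : X × Y → ℝ) (q : X × Y × U → ℝ)

lemma supp_aux (hq : IsAux p q) : ∀ a : X × Y × U, q a ≠ 0 → p (a.1, a.2.1) ≠ 0 := by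
  intro a ha
  have h1 : q (a.1, a.2.1, a.2.2) ≤ ∑ u, q (a.1, a.2.1, u) :=
    Finset.single_le_sum (f := fun u => q (a.1, a.2.1, u)) (fun u _ => hq.1.1 _)
      (Finset.mem_univ a.2.2)
  rw [hq.2] at h1
  have : 0 < q a := lt_of_le_of_ne (hq.1.1 a) (Ne.symm ha)
  exact ne_of_gt (lt_of_lt_of_le this h1)

/-- Generic marginalization: the distribution of a function of `(X, Y)` is the same
under `q` as under `p`. -/
lemma dist_marg {β : Type} (hq : IsAux p q) (F : X × Y → β) (b : β) :
    dist q (fun a => F (a.1, a.2.1)) b = dist p F b := by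
  unfold dist
  rw [Fintype.sum_prod_type (f := fun a : X × Y × U => if F (a.1, a.2.1) = b then q a else 0),
    Fintype.sum_prod_type (f := fun xy : X × Y => if F xy = b then p xy else 0)]
  refine Finset.sum_congr rfl fun x _ => ?_
  rw [Fintype.sum_prod_type (f := fun yu : Y × U => if F (x, yu.1) = b then q (x, yu) else 0)]
  refine Finset.sum_congr rfl fun y _ => ?_
  by_cases h : F (x, y) = b
  · simp only [h, if_pos rfl]
    exact hq.2 x y
  · simp [h]

lemma dist_cX_marg (hq : IsAux p q) (x : X) : dist q cX x = dist p Prod.fst x :=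
  dist_marg p q hq Prod.fst x

lemma dist_cY_marg (hq : IsAux p q) (y : Y) : dist q cY y = dist p Prod.snd y :=
  dist_marg p q hq Prod.snd y

lemma dist_cXY_marg (hq : IsAux p q) (b : X × Y) : dist q cXY b = p b := by
  have h := dist_marg p q hq (fun xy => xy) b
  have h2 : dist q cXY b = dist q (fun a => (fun xy : X × Y => xy) (a.1, a.2.1)) b := rfl
  rw [h2, h]
  unfold dist
  simp only []
  exact (Finset.sum_eq_single b (fun x _ hx => if_neg hx)
    (fun hb => absurd (Finset.mem_univ b) hb)).trans (if_pos rfl)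

lemma dist_pair_id (b : X × Y) : dist p (fun a => (a.1, a.2)) b = p b := by
  unfold dist
  simp

lemma H_cX_marg (hq : IsAux p q) : H q cX = H p Prod.fst :=
  H_eq_of_dist_eq q p cX Prod.fst (dist_cX_marg p q hq)

lemma H_cY_marg (hq : IsAux p q) : H q cY = H p Prod.snd :=
  H_eq_of_dist_eq q p cY Prod.snd (dist_cY_marg p q hq)

lemma H_cXY_marg (hq : IsAux p q) : H q cXY = H p (fun a => (a.1, a.2)) :=
  H_eq_of_dist_eq q p cXY (fun a => (a.1, a.2))
    (fun b => by rw [dist_cXY_marg p q hq b, dist_pair_id p b])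

/-- `I2 p` expressed with entropies under `q`. -/
lemma I2_marg (hq : IsAux p q) :
    I2 p Prod.fst Prod.snd = H q cX + H q cY - H q cXY := by
  unfold I2
  rw [H_cX_marg p q hq, H_cY_marg p q hq, H_cXY_marg p q hq]

end Marginals

section Main

set_option linter.unusedSectionVars false

variable {X Y : Type} [Fintype X] [Fintype Y]

lemma sum_unit_aux (f : X × Y → ℝ) :
    ∑ a : X × Y × Unit, f (a.1, a.2.1) = ∑ xy : X × Y, f xy := by
  rw [Fintype.sum_prod_type (f := fun a : X × Y × Unit => f (a.1, a.2.1)),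
    Fintype.sum_prod_type (f := fun xy : X × Y => f xy)]
  refine Finset.sum_congr rfl fun x _ => ?_
  rw [Fintype.sum_prod_type (f := fun yu : Y × Unit => f (x, yu.1))]
  simp

/-- The trivial (constant) auxiliary variable witnesses `0` in the `GPNI` index set. -/
lemma zero_mem_PNI (p : X × Y → ℝ) (hp : IsPMF p) :
    (0:ℝ) ∈ { r | ∃ (U : Type) (_ : Fintype U) (q : X × Y × U → ℝ), IsAux p q ∧
      Indep q cU cX ∧ r = Ic q cX cY cU - I2 p Prod.fst Prod.snd } := by
  set q0 : X × Y × Unit → ℝ := fun a => p (a.1, a.2.1) with hq0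
  have haux : IsAux p q0 := by
    refine ⟨⟨fun a => hp.1 _, ?_⟩, fun x y => by simp [hq0]⟩
    calc ∑ a : X × Y × Unit, q0 a = ∑ xy : X × Y, p xy := sum_unit_aux p
      _ = 1 := hp.2
  have hU1 : ∀ b, dist q0 cU b = 1 := by
    intro b
    unfold dist cU
    refine Eq.trans (b := ∑ a : X × Y × Unit, q0 a)
      (Finset.sum_congr rfl fun a _ => if_pos (Subsingleton.elim _ _))
      ((sum_unit_aux p).trans hp.2)
  have hind : Indep q0 cU cX := by
    intro b c
    rw [hU1 b, one_mul]
    exact dist_congr q0 _ cX (b, c) c fun a _ => by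
      simp [cU, cX, Prod.ext_iff]
  refine ⟨Unit, inferInstance, q0, haux, hind, ?_⟩
  have hHU : H q0 cU = 0 := by
    unfold H
    simp [hU1]
  have hXU : H q0 (fun a => (cX a, cU a)) = H q0 cX :=
    H_congr q0 _ cX fun a _ a' _ => by simp [cX, cU, Prod.ext_iff]
  have hYU : H q0 (fun a => (cY a, cU a)) = H q0 cY :=
    H_congr q0 _ cY fun a _ a' _ => by simp [cY, cU, Prod.ext_iff]
  have hXYU : H q0 (fun a => ((cX a, cY a), cU a)) = H q0 cXY :=
    H_congr q0 _ cXY fun a _ a' _ => by simp [cX, cY, cXY, cU, Prod.ext_iff]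
  unfold Ic Hc
  rw [hHU, hXU, hYU, hXYU, I2_marg p q0 haux]
  ring

/-- Uniform upper bound for the conditional interaction information. -/
lemma Ic_le_HY {U : Type} [Fintype U] (p : X × Y → ℝ) (q : X × Y × U → ℝ)
    (hq : IsAux p q) :
    Ic q cX cY cU ≤ H p Prod.snd := by
  have hnn := hq.1.1
  have hmono : H q (fun a => (cX a, cU a)) ≤ H q (fun a => ((cX a, cY a), cU a)) := by
    have := H_comp_le q hnn (fun a => ((cX a, cY a), cU a)) (fun bu => (bu.1.1, bu.2))
    exact this
  have hsub : H q (fun a => (cY a, cU a)) ≤ H q cY + H q cU :=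
    H_pair_le_add q hnn hq.1.2 cY cU
  have hY : H q cY = H p Prod.snd := H_cY_marg p q hq
  unfold Ic Hc
  linarith

lemma bdd_NNI (p : X × Y → ℝ) :
    BddAbove { r | ∃ (U : Type) (_ : Fintype U) (q : X × Y × U → ℝ), IsAux p q ∧
      r = Ic q cX cY cU - I2 p Prod.fst Prod.snd } := by
  refine ⟨H p Prod.snd - I2 p Prod.fst Prod.snd, fun r hr => ?_⟩
  obtain ⟨U, instU, q, hq, rfl⟩ := hr
  exact sub_le_sub_right (Ic_le_HY p q hq) _

/-- The support of `p` is a disjoint union of "stars": there is no path `x—y—x'—y'`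
with `x ≠ x'` and `y ≠ y'`. -/
def StarP (p : X × Y → ℝ) : Prop :=
  ∀ x x' y y', p (x, y) ≠ 0 → p (x', y) ≠ 0 → p (x', y') ≠ 0 → x = x' ∨ y = y'

lemma star_Ic_le (p : X × Y → ℝ) (hp : IsPMF p) (hstar : StarP p)
    {U : Type} [Fintype U] (q : X × Y × U → ℝ) (hq : IsAux p q) :
    Ic q cX cY cU - I2 p Prod.fst Prod.snd ≤ 0 := by
  classical
  have hnn := hq.1.1
  have hsupp := supp_aux p q hq
  set C : X × Y × U → X ⊕ Y :=
    fun a => if ∃ x', x' ≠ a.1 ∧ p (x', a.2.1) ≠ 0 then Sum.inr a.2.1 else Sum.inl a.1 with hC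
  have e1 : Ic q cX cY cU - I2 p Prod.fst Prod.snd
      = ∑ a, q a * (Real.logb 2 (dist q cU (cU a))
          + Real.logb 2 (dist q (fun a => ((cX a, cY a), cU a)) ((cX a, cY a), cU a))
          - Real.logb 2 (dist q (fun a => (cX a, cU a)) (cX a, cU a))
          - Real.logb 2 (dist q (fun a => (cY a, cU a)) (cY a, cU a))
          + Real.logb 2 (dist q cX (cX a))
          + Real.logb 2 (dist q cY (cY a))
          - Real.logb 2 (dist q (fun a => (cX a, cY a)) (cX a, cY a))) := by
    unfold Ic Hc
    rw [I2_marg p q hq]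
    rw [show H q cXY = H q (fun a => (cX a, cY a)) from rfl]
    rw [H_eq_sum q cU, H_eq_sum q (fun a => (cX a, cU a)),
      H_eq_sum q (fun a => (cY a, cU a)),
      H_eq_sum q (fun a => ((cX a, cY a), cU a)),
      H_eq_sum q cX, H_eq_sum q cY, H_eq_sum q (fun a => (cX a, cY a))]
    simp only [← Finset.sum_sub_distrib, ← Finset.sum_add_distrib]
    refine Finset.sum_congr rfl fun a _ => by ring
  have e2 : ∑ a, q a * (Real.logb 2 (dist q cU (cU a))
          + Real.logb 2 (dist q (fun a => ((cX a, cY a), cU a)) ((cX a, cY a), cU a))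
          - Real.logb 2 (dist q (fun a => (cX a, cU a)) (cX a, cU a))
          - Real.logb 2 (dist q (fun a => (cY a, cU a)) (cY a, cU a))
          + Real.logb 2 (dist q cX (cX a))
          + Real.logb 2 (dist q cY (cY a))
          - Real.logb 2 (dist q (fun a => (cX a, cY a)) (cX a, cY a)))
      = ∑ a, q a * (Real.logb 2 (dist q C (C a)) + Real.logb 2 (dist q cU (cU a))
          - Real.logb 2 (dist q (fun a => (C a, cU a)) (C a, cU a))) := by
    refine Finset.sum_congr rfl fun a _ => ?_
    by_cases hqa : q a = 0
    · rw [hqa]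
      ring
    have hpxy : p (a.1, a.2.1) ≠ 0 := hsupp a hqa
    by_cases hsh : ∃ x', x' ≠ a.1 ∧ p (x', a.2.1) ≠ 0
    · -- shared column: the component is the `Y`-star centered at `a.2.1`
      have hCa : C a = Sum.inr a.2.1 := by
        simp only [hC]
        rw [if_pos hsh]
      have hdet : ∀ y', p (a.1, y') ≠ 0 → y' = a.2.1 := by
        obtain ⟨x'', hne, hp''⟩ := hsh
        intro y' hy'
        rcases hstar x'' a.1 a.2.1 y' hp'' hpxy hy' with h | h
        · exact absurd h hne
        · exact h.symm
      have hCshape : ∀ a' : X × Y × U, q a' ≠ 0 → (a'.2.1 = a.2.1 ↔ C a' = Sum.inr a.2.1) := by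
        intro a' ha'
        constructor
        · intro h
          have hp' : p (a'.1, a.2.1) ≠ 0 := by
            have := hsupp a' ha'
            rwa [h] at this
          have hsh' : ∃ x', x' ≠ a'.1 ∧ p (x', a'.2.1) ≠ 0 := by
            obtain ⟨x'', hne, hp''⟩ := hsh
            by_cases hx : a'.1 = x''
            · exact ⟨a.1, by rw [hx]; exact fun hh => hne hh.symm, by rwa [h]⟩
            · exact ⟨x'', fun hh => hx hh.symm, by rwa [h]⟩
          simp only [hC]
          rw [if_pos hsh', h]
        · intro h
          simp only [hC] at h
          split at h
          · exact Sum.inr_injective h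
          · exact absurd h (by simp)
      have d1 : dist q (fun a => ((cX a, cY a), cU a)) ((cX a, cY a), cU a)
          = dist q (fun a => (cX a, cU a)) (cX a, cU a) := by
        refine dist_congr q _ _ _ _ fun a' ha' => ?_
        simp only [cX, cY, cU, Prod.ext_iff]
        constructor
        · tauto
        · rintro ⟨h1, h2⟩
          refine ⟨⟨h1, ?_⟩, h2⟩
          have := hsupp a' ha'
          rw [h1] at this
          exact hdet _ this
      have d2 : dist q (fun a => (cX a, cY a)) (cX a, cY a) = dist q cX (cX a) := by
        refine dist_congr q _ _ _ _ fun a' ha' => ?_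
        simp only [cX, cY, Prod.ext_iff]
        constructor
        · tauto
        · intro h1
          refine ⟨h1, ?_⟩
          have := hsupp a' ha'
          rw [h1] at this
          exact hdet _ this
      have d3 : dist q cY (cY a) = dist q C (C a) := by
        rw [hCa]
        refine dist_congr q _ _ _ _ fun a' ha' => ?_
        simp only [cY]
        exact hCshape a' ha'
      have d4 : dist q (fun a => (cY a, cU a)) (cY a, cU a)
          = dist q (fun a => (C a, cU a)) (C a, cU a) := by
        rw [hCa]
        refine dist_congr q _ _ _ _ fun a' ha' => ?_
        simp only [cY, cU, Prod.ext_iff]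
        rw [and_congr_left_iff]
        intro _
        exact hCshape a' ha'
      rw [d1, d2, d3, d4]
      ring
    · -- unshared column: the component is the `X`-star centered at `a.1`
      have hCa : C a = Sum.inl a.1 := by
        simp only [hC]
        rw [if_neg hsh]
      push_neg at hsh
      have hdetx : ∀ x', p (x', a.2.1) ≠ 0 → x' = a.1 := by
        intro x' h
        by_contra hne
        exact h (hsh x' hne)
      have hrow : ∀ y' x', p (a.1, y') ≠ 0 → p (x', y') ≠ 0 → x' = a.1 := by
        intro y' x' h1 h2
        rcases hstar x' a.1 y' a.2.1 h2 h1 hpxy with h | h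
        · exact h
        · rw [h] at h2
          exact hdetx x' h2
      have hCshape : ∀ a' : X × Y × U, q a' ≠ 0 → (a'.1 = a.1 ↔ C a' = Sum.inl a.1) := by
        intro a' ha'
        constructor
        · intro h
          have hp' : p (a.1, a'.2.1) ≠ 0 := by
            have := hsupp a' ha'
            rwa [h] at this
          have hsh' : ¬∃ x', x' ≠ a'.1 ∧ p (x', a'.2.1) ≠ 0 := by
            rintro ⟨x'', hne, hp''⟩
            exact hne ((hrow _ _ hp' hp'').trans h.symm)
          simp only [hC]
          rw [if_neg hsh', h]
        · intro h
          simp only [hC] at h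
          split at h
          · exact absurd h (by simp)
          · exact Sum.inl_injective h
      have d1 : dist q (fun a => ((cX a, cY a), cU a)) ((cX a, cY a), cU a)
          = dist q (fun a => (cY a, cU a)) (cY a, cU a) := by
        refine dist_congr q _ _ _ _ fun a' ha' => ?_
        simp only [cX, cY, cU, Prod.ext_iff]
        constructor
        · tauto
        · rintro ⟨h1, h2⟩
          refine ⟨⟨?_, h1⟩, h2⟩
          have := hsupp a' ha'
          rw [h1] at this
          exact hdetx _ this
      have d2 : dist q (fun a => (cX a, cY a)) (cX a, cY a) = dist q cY (cY a) := by
        refine dist_congr q _ _ _ _ fun a' ha' => ?_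
        simp only [cX, cY, Prod.ext_iff]
        constructor
        · tauto
        · intro h1
          refine ⟨?_, h1⟩
          have := hsupp a' ha'
          rw [h1] at this
          exact hdetx _ this
      have d3 : dist q cX (cX a) = dist q C (C a) := by
        rw [hCa]
        refine dist_congr q _ _ _ _ fun a' ha' => ?_
        simp only [cX]
        exact hCshape a' ha'
      have d4 : dist q (fun a => (cX a, cU a)) (cX a, cU a)
          = dist q (fun a => (C a, cU a)) (C a, cU a) := by
        rw [hCa]
        refine dist_congr q _ _ _ _ fun a' ha' => ?_
        simp only [cX, cU, Prod.ext_iff]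
        rw [and_congr_left_iff]
        intro _
        exact hCshape a' ha'
      rw [d1, d2, d3, d4]
      ring
  have e3 : ∑ a, q a * (Real.logb 2 (dist q C (C a)) + Real.logb 2 (dist q cU (cU a))
          - Real.logb 2 (dist q (fun a => (C a, cU a)) (C a, cU a)))
      = H q (fun a => (C a, cU a)) - H q C - H q cU := by
    rw [H_eq_sum q (fun a => (C a, cU a)), H_eq_sum q C, H_eq_sum q cU]
    simp only [← Finset.sum_sub_distrib, ← Finset.sum_add_distrib]
    refine Finset.sum_congr rfl fun a _ => by ring
  have hsub := H_pair_le_add q hnn hq.1.2 C cU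
  rw [e1, e2, e3]
  linarith

lemma sum_ite_single' {β : Type} [Fintype β] (b : β) (f : β → ℝ) :
    ∑ b', (if b' = b then f b' else 0) = f b :=
  (Finset.sum_eq_single b (fun b' _ hb' => if_neg hb')
    (fun hb => absurd (Finset.mem_univ b) hb)).trans (if_pos rfl)

lemma sum_dist_pair_fst {α β γ : Type} [Fintype α] [Fintype β] [Fintype γ]
    (p : α → ℝ) (f : α → β) (g : α → γ) (c : γ) :
    ∑ b, dist p (fun a => (f a, g a)) (b, c) = dist p g c := by
  unfold dist
  rw [Finset.sum_comm]
  refine Finset.sum_congr rfl fun a _ => ?_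
  by_cases hg : g a = c
  · refine Eq.trans (Finset.sum_eq_single (f a)
      (fun b _ hb => if_neg fun h => hb (congrArg Prod.fst h).symm)
      (fun hb => absurd (Finset.mem_univ _) hb)) ?_
    rw [if_pos (show _ = ((f a, c) : β × γ) by dsimp only; rw [hg]), if_pos hg]
  · refine Eq.trans (Finset.sum_eq_zero fun b _ => if_neg fun h => hg (congrArg Prod.snd h)) ?_
    rw [if_neg hg]

lemma sum_dist_pair_snd {α β γ : Type} [Fintype α] [Fintype β] [Fintype γ]
    (p : α → ℝ) (f : α → β) (g : α → γ) (b : β) :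
    ∑ c, dist p (fun a => (f a, g a)) (b, c) = dist p f b := by
  unfold dist
  rw [Finset.sum_comm]
  refine Finset.sum_congr rfl fun a _ => ?_
  by_cases hf : f a = b
  · refine Eq.trans (Finset.sum_eq_single (g a)
      (fun c _ hc => if_neg fun h => hc (congrArg Prod.snd h).symm)
      (fun hc => absurd (Finset.mem_univ _) hc)) ?_
    rw [if_pos (show _ = ((b, g a) : β × γ) by dsimp only; rw [hf]), if_pos hf]
  · refine Eq.trans (Finset.sum_eq_zero fun c _ => if_neg fun h => hf (congrArg Prod.fst h)) ?_
    rw [if_neg hf]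

lemma dist_fst_sum (p : X × Y → ℝ) (x : X) : dist p Prod.fst x = ∑ y, p (x, y) := by
  have h1 := sum_dist_pair_snd p Prod.fst Prod.snd x
  have h2 : ∀ y, dist p (fun a => (Prod.fst a, Prod.snd a)) (x, y) = p (x, y) := by
    intro y
    refine Eq.trans (dist_congr p _ (fun a => a) _ ((x, y) : X × Y)
      (fun a _ => by simp [Prod.ext_iff])) ?_
    unfold dist
    exact (Finset.sum_eq_single ((x, y) : X × Y) (fun a _ ha => if_neg ha)
      (fun ha => absurd (Finset.mem_univ _) ha)).trans (if_pos rfl)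
  rw [← h1]
  exact Finset.sum_congr rfl fun y _ => h2 y

lemma dist_snd_sum (p : X × Y → ℝ) (y : Y) : dist p Prod.snd y = ∑ x, p (x, y) := by
  have h1 := sum_dist_pair_fst p Prod.fst Prod.snd y
  have h2 : ∀ x, dist p (fun a => (Prod.fst a, Prod.snd a)) (x, y) = p (x, y) := by
    intro x
    refine Eq.trans (dist_congr p _ (fun a => a) _ ((x, y) : X × Y)
      (fun a _ => by simp [Prod.ext_iff])) ?_
    unfold dist
    exact (Finset.sum_eq_single ((x, y) : X × Y) (fun a _ ha => if_neg ha)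
      (fun ha => absurd (Finset.mem_univ _) ha)).trans (if_pos rfl)
  rw [← h1]
  exact Finset.sum_congr rfl fun x _ => h2 x

section Plumb

set_option linter.unusedSectionVars false

variable {X Y : Type} [Fintype X] [Fintype Y] {U : Type} [Fintype U] (q : X × Y × U → ℝ)

lemma dist_point (t : X × Y × U) : dist q (fun a => a) t = q t := by
  unfold dist
  exact (Finset.sum_eq_single t (fun a _ ha => if_neg ha)
    (fun ha => absurd (Finset.mem_univ _) ha)).trans (if_pos rfl)

lemma dist_triple (x : X) (y : Y) (u : U) :
    dist q (fun a => ((cX a, cY a), cU a)) ((x, y), u) = q (x, y, u) := by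
  refine Eq.trans (dist_congr q _ (fun a => a) _ ((x, y, u) : X × Y × U)
    (fun a _ => by simp [cX, cY, cU, Prod.ext_iff]; try tauto)) (dist_point q _)

lemma dist_cXcU_sum (x : X) (u : U) :
    dist q (fun a => (cX a, cU a)) (x, u) = ∑ y, q (x, y, u) := by
  have h1 := sum_dist_pair_fst q cY (fun a => (cX a, cU a)) ((x, u) : X × U)
  have h2 : ∀ y, dist q (fun a => (cY a, (cX a, cU a))) (y, (x, u)) = q (x, y, u) := by
    intro y
    refine Eq.trans (dist_congr q _ (fun a => a) _ ((x, y, u) : X × Y × U)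
      (fun a _ => by simp [cX, cY, cU, Prod.ext_iff]; try tauto)) (dist_point q _)
  rw [← h1]
  exact Finset.sum_congr rfl fun y _ => h2 y

lemma dist_cUcX_sum (x : X) (u : U) :
    dist q (fun a => (cU a, cX a)) (u, x) = ∑ y, q (x, y, u) := by
  rw [← dist_cXcU_sum q x u]
  exact dist_congr q _ _ _ _ fun a _ => by simp [cX, cU, Prod.ext_iff, and_comm]

lemma dist_cYcU_sum (y : Y) (u : U) :
    dist q (fun a => (cY a, cU a)) (y, u) = ∑ x, q (x, y, u) := by
  have h1 := sum_dist_pair_fst q cX (fun a => (cY a, cU a)) ((y, u) : Y × U)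
  have h2 : ∀ x, dist q (fun a => (cX a, (cY a, cU a))) (x, (y, u)) = q (x, y, u) := by
    intro x
    refine Eq.trans (dist_congr q _ (fun a => a) _ ((x, y, u) : X × Y × U)
      (fun a _ => by simp [cX, cY, cU, Prod.ext_iff]; try tauto)) (dist_point q _)
  rw [← h1]
  exact Finset.sum_congr rfl fun x _ => h2 x

lemma dist_cU_sum (u : U) : dist q cU u = ∑ x, ∑ y, q (x, y, u) := by
  have h1 := sum_dist_pair_fst q (fun a => (cX a, cY a)) cU u
  have h2 : ∀ x y, dist q (fun a => ((cX a, cY a), cU a)) ((x, y), u) = q (x, y, u) :=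
    fun x y => dist_triple q x y u
  rw [← h1, Fintype.sum_prod_type]
  exact Finset.sum_congr rfl fun x _ => Finset.sum_congr rfl fun y _ => h2 x y

lemma sum3 (f : X × Y × U → ℝ) : ∑ a, f a = ∑ x, ∑ y, ∑ u, f (x, y, u) := by
  rw [Fintype.sum_prod_type (f := f)]
  exact Finset.sum_congr rfl fun x _ => Fintype.sum_prod_type (f := fun yu => f (x, yu))

end Plumb

section NotStar

set_option linter.unusedSectionVars false

variable {X Y : Type} [Fintype X] [Fintype Y]

lemma sumXY (p : X × Y → ℝ) : ∑ x, ∑ y, p (x, y) = ∑ xy, p xy :=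
  (Fintype.sum_prod_type (f := fun xy : X × Y => p xy)).symm

lemma not_star_pos (p : X × Y → ℝ) (hp : IsPMF p) (hns : ¬ StarP p) :
    ∃ r : ℝ, (r ∈ { r | ∃ (U : Type) (_ : Fintype U) (q : X × Y × U → ℝ), IsAux p q ∧
      Indep q cU cX ∧ r = Ic q cX cY cU - I2 p Prod.fst Prod.snd }) ∧ 0 < r := by
  classical
  unfold StarP at hns
  push_neg at hns
  obtain ⟨x₀, x₁, y₀, y₁, h00, h10, h11, hxx, hyy⟩ := hns
  have hpn := hp.1
  have p00 : 0 < p (x₀, y₀) := lt_of_le_of_ne (hpn _) (Ne.symm h00)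
  have p10 : 0 < p (x₁, y₀) := lt_of_le_of_ne (hpn _) (Ne.symm h10)
  have p11 : 0 < p (x₁, y₁) := lt_of_le_of_ne (hpn _) (Ne.symm h11)
  set s : ℝ := p (x₁, y₀) + p (x₁, y₁) with hs
  have hs0 : 0 < s := add_pos p10 p11
  set c : ℝ := 1 / (4 * s) with hc
  have hc0 : 0 < c := by positivity
  set g : X × Y → ℝ := fun xy => (if xy = (x₁, y₀) then c * p (x₁, y₁) else 0)
      - (if xy = (x₁, y₁) then c * p (x₁, y₀) else 0) with hg
  have hne10 : ((x₁, y₀) : X × Y) ≠ (x₁, y₁) := fun h => hyy (congrArg Prod.snd h)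
  have hg10 : g (x₁, y₀) = c * p (x₁, y₁) := by
    rw [hg]
    dsimp only
    rw [if_pos rfl, if_neg hne10, sub_zero]
  have hg11 : g (x₁, y₁) = -(c * p (x₁, y₀)) := by
    rw [hg]
    dsimp only
    rw [if_pos rfl, if_neg (Ne.symm hne10), zero_sub]
  have hb1 : c * p (x₁, y₁) ≤ 1/4 := by
    have h4 : (0:ℝ) < 4 * s := by positivity
    rw [hc, one_div, inv_mul_eq_div, div_le_iff₀ h4]
    rw [hs]
    linarith
  have hb2 : c * p (x₁, y₀) ≤ 1/4 := by
    have h4 : (0:ℝ) < 4 * s := by positivity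
    rw [hc, one_div, inv_mul_eq_div, div_le_iff₀ h4]
    rw [hs]
    linarith
  have hgrange : ∀ xy, -(1/4 : ℝ) ≤ g xy ∧ g xy ≤ 1/4 := by
    intro xy
    rw [hg]
    dsimp only
    by_cases h1 : xy = (x₁, y₀)
    · rw [if_pos h1, if_neg (fun h => hne10 (h1.symm.trans h)), sub_zero]
      have := mul_pos hc0 p11
      constructor <;> linarith
    · rw [if_neg h1]
      by_cases h2 : xy = (x₁, y₁)
      · rw [if_pos h2, zero_sub]
        have := mul_pos hc0 p10
        constructor <;> linarith
      · rw [if_neg h2]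
        norm_num
  set w : X × Y → Bool → ℝ := fun xy u => 1/2 + (if u then g xy else -(g xy)) with hw
  have hwpos : ∀ xy u, 0 < w xy u := by
    intro xy u
    have := hgrange xy
    rw [hw]
    cases u
    · dsimp only
      rw [if_neg (by simp)]
      linarith [this.2]
    · dsimp only
      rw [if_pos rfl]
      linarith [this.1]
  have hwsum : ∀ xy, w xy true + w xy false = 1 := by
    intro xy
    rw [hw]
    dsimp only
    rw [if_pos rfl, if_neg (by simp)]
    ring
  set q : X × Y × Bool → ℝ := fun a => p (a.1, a.2.1) * w (a.1, a.2.1) a.2.2 with hqdef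
  have hrsum : ∀ (x : X) (y' : Y) (K : ℝ),
      (∑ y, p (x, y) * (if ((x, y) : X × Y) = (x₁, y') then K else 0))
        = if x = x₁ then p (x₁, y') * K else 0 := by
    intro x y' K
    by_cases hx : x = x₁
    · subst hx
      rw [if_pos rfl]
      have hterm : ∀ y, p (x, y) * (if ((x, y) : X × Y) = (x, y') then K else 0)
          = if y = y' then p (x, y') * K else 0 := by
        intro y
        by_cases hy : y = y'
        · rw [if_pos (by rw [hy]), if_pos hy, hy]
        · rw [if_neg (fun h => hy (congrArg Prod.snd h)), if_neg hy, mul_zero]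
      rw [Finset.sum_congr rfl fun y _ => hterm y]
      exact sum_ite_single' y' _
    · rw [if_neg hx]
      refine Finset.sum_eq_zero fun y _ => ?_
      rw [if_neg (fun h => hx (congrArg Prod.fst h)), mul_zero]
  have hcsum : ∀ (y y' : Y) (K : ℝ),
      (∑ x, p (x, y) * (if ((x, y) : X × Y) = (x₁, y') then K else 0))
        = if y = y' then p (x₁, y') * K else 0 := by
    intro y y' K
    by_cases hy : y = y'
    · subst hy
      rw [if_pos rfl]
      have hterm : ∀ x, p (x, y) * (if ((x, y) : X × Y) = (x₁, y) then K else 0)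
          = if x = x₁ then p (x₁, y) * K else 0 := by
        intro x
        by_cases hx : x = x₁
        · rw [if_pos (by rw [hx]), if_pos hx, hx]
        · rw [if_neg (fun h => hx (congrArg Prod.fst h)), if_neg hx, mul_zero]
      rw [Finset.sum_congr rfl fun x _ => hterm x]
      exact sum_ite_single' x₁ _
    · rw [if_neg hy]
      refine Finset.sum_eq_zero fun x _ => ?_
      rw [if_neg (fun h => hy (congrArg Prod.snd h)), mul_zero]
  have hexpand : ∀ xy : X × Y, p xy * g xy
      = p xy * (if xy = (x₁, y₀) then c * p (x₁, y₁) else 0)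
        - p xy * (if xy = (x₁, y₁) then c * p (x₁, y₀) else 0) := by
    intro xy
    rw [hg]
    dsimp only
    ring
  have hrow : ∀ x, ∑ y, p (x, y) * g (x, y) = 0 := by
    intro x
    rw [Finset.sum_congr rfl fun y _ => hexpand (x, y), Finset.sum_sub_distrib,
      hrsum x y₀ _, hrsum x y₁ _]
    by_cases hx : x = x₁
    · rw [if_pos hx, if_pos hx]
      ring
    · rw [if_neg hx, if_neg hx]
      ring
  have hmargu : ∀ x y, ∑ u : Bool, q (x, y, u) = p (x, y) := by
    intro x y
    rw [Fintype.sum_bool]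
    rw [hqdef]
    dsimp only
    rw [← mul_add, hwsum, mul_one]
  have haux : IsAux p q := by
    refine ⟨⟨fun a => mul_nonneg (hpn _) (hwpos _ _).le, ?_⟩, hmargu⟩
    calc ∑ a, q a = ∑ x, ∑ y, ∑ u, q (x, y, u) := sum3 q
      _ = ∑ x, ∑ y, p (x, y) :=
          Finset.sum_congr rfl fun x _ => Finset.sum_congr rfl fun y _ => hmargu x y
      _ = ∑ xy, p xy := sumXY p
      _ = 1 := hp.2
  have hnnq : ∀ a, 0 ≤ q a := haux.1.1
  have hq1 : ∑ a, q a = 1 := haux.1.2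
  have hpX : ∀ x, dist q cX x = ∑ y, p (x, y) := by
    intro x
    rw [dist_cX_marg p q haux, dist_fst_sum]
  have hrowq : ∀ x u, ∑ y, q (x, y, u) = (∑ y, p (x, y)) / 2 := by
    intro x u
    have hterm : ∀ y, q (x, y, u) = p (x, y)/2
        + (if u then p (x, y) * g (x, y) else -(p (x, y) * g (x, y))) := by
      intro y
      rw [hqdef, hw]
      dsimp only
      cases u
      · rw [if_neg (by simp), if_neg (by simp)]
        ring
      · rw [if_pos rfl, if_pos rfl]
        ring
    rw [Finset.sum_congr rfl fun y _ => hterm y, Finset.sum_add_distrib]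
    have h0 : (∑ y, (if u then p (x, y) * g (x, y) else -(p (x, y) * g (x, y)))) = 0 := by
      cases u
      · refine Eq.trans (Finset.sum_congr rfl fun y _ => if_neg (by simp)) ?_
        rw [Finset.sum_neg_distrib, hrow x, neg_zero]
      · refine Eq.trans (Finset.sum_congr rfl fun y _ => if_pos rfl) ?_
        exact hrow x
    rw [h0, add_zero, ← Finset.sum_div]
  have htot : ∑ x, (∑ y, p (x, y)) = 1 := by
    rw [sumXY p]
    exact hp.2
  have hdU : ∀ u, dist q cU u = 1/2 := by
    intro u
    rw [dist_cU_sum]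
    rw [Finset.sum_congr rfl fun x _ => hrowq x u, ← Finset.sum_div, htot]
  have hind : Indep q cU cX := by
    intro u x
    rw [dist_cUcX_sum q x u, hrowq x u, hdU u, hpX x]
    ring
  have hdXY : ∀ x y, dist q (fun a => (cX a, cY a)) (x, y) = p (x, y) := fun x y =>
    dist_cXY_marg p q haux (x, y)
  have hdY : ∀ y, dist q cY y = ∑ x, p (x, y) := by
    intro y
    rw [dist_cY_marg p q haux, dist_snd_sum]
  have hpY0 : p (x₁, y₀) < ∑ x, p (x, y₀) := by
    have hsub : ({x₀, x₁} : Finset X) ⊆ Finset.univ := Finset.subset_univ _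
    have hh := Finset.sum_le_sum_of_subset_of_nonneg hsub (fun x _ _ => hpn (x, y₀))
    rw [Finset.sum_pair hxx] at hh
    linarith
  have hcolsum : ∑ x, p (x, y₀) * g (x, y₀) = p (x₁, y₀) * (c * p (x₁, y₁)) := by
    rw [Finset.sum_congr rfl fun x _ => hexpand (x, y₀), Finset.sum_sub_distrib,
      hcsum y₀ y₀ _, hcsum y₀ y₁ _, if_pos rfl, if_neg hyy]
    ring
  have hdYU : dist q (fun a => (cY a, cU a)) (y₀, true)
      = (∑ x, p (x, y₀))/2 + p (x₁, y₀) * (c * p (x₁, y₁)) := by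
    rw [dist_cYcU_sum]
    have hterm : ∀ x, q (x, y₀, true) = p (x, y₀)/2 + p (x, y₀) * g (x, y₀) := by
      intro x
      rw [hqdef, hw]
      dsimp only
      rw [if_pos rfl]
      ring
    rw [Finset.sum_congr rfl fun x _ => hterm x, Finset.sum_add_distrib, ← Finset.sum_div,
      hcolsum]
  set Bf : X × Y × Bool → ℝ := fun a =>
    dist q (fun a => (cX a, cY a)) (cX a, cY a) * dist q (fun a => (cY a, cU a)) (cY a, cU a)
      / dist q cY (cY a) with hBf
  have hBnn : ∀ a, 0 ≤ Bf a := fun a => div_nonneg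
    (mul_nonneg (dist_nonneg' q hnnq _ _) (dist_nonneg' q hnnq _ _)) (dist_nonneg' q hnnq _ _)
  have hB0 : ∀ a, Bf a = 0 → q a = 0 := by
    intro a hB
    by_contra hqa
    have h1 : 0 < dist q (fun a => (cX a, cY a)) (cX a, cY a) :=
      dist_pos q hnnq (fun a => (cX a, cY a)) a hqa
    have h2 : 0 < dist q (fun a => (cY a, cU a)) (cY a, cU a) :=
      dist_pos q hnnq (fun a => (cY a, cU a)) a hqa
    have h3 : 0 < dist q cY (cY a) := dist_pos q hnnq cY a hqa
    exact absurd hB (ne_of_gt (div_pos (mul_pos h1 h2) h3))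
  have hBsum : ∑ a, Bf a ≤ ∑ a, q a := by
    rw [hq1]
    have hpt : ∀ x y, ∑ u, Bf (x, y, u) ≤ p (x, y) := by
      intro x y
      by_cases h0 : dist q cY y = 0
      · have hz : ∀ u, Bf (x, y, u) = 0 := by
          intro u
          have hB : Bf (x, y, u) = dist q (fun a => (cX a, cY a)) (x, y)
              * dist q (fun a => (cY a, cU a)) (y, u) / dist q cY y := rfl
          rw [hB, h0, div_zero]
        rw [Finset.sum_congr rfl fun u _ => hz u]
        simp [hpn (x, y)]
      · have hterm : ∀ u : Bool, Bf (x, y, u)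
            = (p (x, y) / dist q cY y) * dist q (fun a => (cY a, cU a)) (y, u) := by
          intro u
          have hB : Bf (x, y, u) = dist q (fun a => (cX a, cY a)) (x, y)
              * dist q (fun a => (cY a, cU a)) (y, u) / dist q cY y := rfl
          rw [hB, hdXY x y]
          ring
        rw [Finset.sum_congr rfl fun u _ => hterm u, ← Finset.mul_sum,
          sum_dist_pair_snd q cY cU y, div_mul_cancel₀ _ h0]
    calc ∑ a, Bf a = ∑ x, ∑ y, ∑ u, Bf (x, y, u) := sum3 Bf
      _ ≤ ∑ x, ∑ y, p (x, y) := Finset.sum_le_sum fun x _ => Finset.sum_le_sum fun y _ => hpt x y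
      _ = 1 := htot.symm ▸ rfl
  have hwit_q : q (x₁, y₀, true) = p (x₁, y₀) * (1/2 + c * p (x₁, y₁)) := by
    rw [hqdef, hw]
    dsimp only
    rw [if_pos rfl, hg10]
  have hq_pos : q (x₁, y₀, true) ≠ 0 := by
    rw [hwit_q]
    have : (0:ℝ) < 1/2 + c * p (x₁, y₁) := by positivity
    positivity
  have hwit_B : Bf (x₁, y₀, true)
      = p (x₁, y₀) * ((∑ x, p (x, y₀))/2 + p (x₁, y₀) * (c * p (x₁, y₁))) / (∑ x, p (x, y₀)) := by
    have hB : Bf (x₁, y₀, true) = dist q (fun a => (cX a, cY a)) (x₁, y₀)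
        * dist q (fun a => (cY a, cU a)) (y₀, true) / dist q cY y₀ := rfl
    rw [hB, hdXY x₁ y₀, hdYU, hdY y₀]
  have hneq : q (x₁, y₀, true) ≠ Bf (x₁, y₀, true) := by
    rw [hwit_q, hwit_B]
    have hT : 0 < ∑ x, p (x, y₀) := lt_trans p10 hpY0
    apply ne_of_gt
    rw [div_lt_iff₀ hT]
    nlinarith [mul_pos (mul_pos p10 hc0) p11]
  have hgibbs := gibbs_lt q Bf hnnq hBnn hB0 hBsum (x₁, y₀, true) hq_pos hneq
  have hA : H q (fun a => (cX a, cY a)) + H q (fun a => (cY a, cU a)) - H q cY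
      - H q (fun a => ((cX a, cY a), cU a)) = -∑ a, q a * Real.logb 2 (Bf a / q a) := by
    rw [H_eq_sum q (fun a => (cX a, cY a)), H_eq_sum q (fun a => (cY a, cU a)),
      H_eq_sum q cY, H_eq_sum q (fun a => ((cX a, cY a), cU a))]
    simp only [← Finset.sum_neg_distrib, ← Finset.sum_sub_distrib, ← Finset.sum_add_distrib]
    refine Finset.sum_congr rfl fun a _ => ?_
    by_cases hqa : q a = 0
    · simp [hqa]
    have h1 : 0 < dist q (fun a => (cX a, cY a)) (cX a, cY a) :=
      dist_pos q hnnq (fun a => (cX a, cY a)) a hqa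
    have h2 : 0 < dist q (fun a => (cY a, cU a)) (cY a, cU a) :=
      dist_pos q hnnq (fun a => (cY a, cU a)) a hqa
    have h3 : 0 < dist q cY (cY a) := dist_pos q hnnq cY a hqa
    have h4 : dist q (fun a => ((cX a, cY a), cU a)) ((cX a, cY a), cU a) = q a :=
      dist_triple q a.1 a.2.1 a.2.2
    have hBa : Bf a = dist q (fun a => (cX a, cY a)) (cX a, cY a)
        * dist q (fun a => (cY a, cU a)) (cY a, cU a) / dist q cY (cY a) := rfl
    rw [h4, hBa]
    rw [Real.logb_div (by positivity) hqa,
      Real.logb_div (mul_ne_zero h1.ne' h2.ne') h3.ne', Real.logb_mul h1.ne' h2.ne']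
    ring
  have hfact : ∀ b c, dist q (fun a => (cX a, cU a)) (b, c) = dist q cX b * dist q cU c := by
    intro x u
    rw [dist_cXcU_sum q x u, hrowq x u, hdU u, hpX x]
    ring
  have hHadd := H_indep_add q hq1 cX cU hfact
  refine ⟨Ic q cX cY cU - I2 p Prod.fst Prod.snd,
    ⟨Bool, inferInstance, q, haux, hind, rfl⟩, ?_⟩
  have hrewrite : Ic q cX cY cU - I2 p Prod.fst Prod.snd
      = (H q (fun a => (cX a, cY a)) + H q (fun a => (cY a, cU a)) - H q cY
          - H q (fun a => ((cX a, cY a), cU a)))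
        + (H q (fun a => (cX a, cU a)) - H q cX - H q cU) := by
    unfold Ic Hc
    rw [I2_marg p q haux, show H q cXY = H q (fun a => (cX a, cY a)) from rfl]
    ring
  rw [hrewrite, hA, hHadd]
  have : H q cX + H q cU - H q cX - H q cU = 0 := by ring
  linarith [hgibbs]

end NotStar

end Main

/-- `G_PNI(X→Y) = 0` if and only if `G_NNI(X;Y) = 0`. -/
theorem stmt11 {X Y : Type} [Fintype X] [Fintype Y] (p : X × Y → ℝ) (hp : IsPMF p) :
    GPNI p = 0 ↔ GNNI p = 0 := by
  classical
  have hbddN := bdd_NNI p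
  have hPsubN : { r | ∃ (U : Type) (_ : Fintype U) (q : X × Y × U → ℝ), IsAux p q ∧
        Indep q cU cX ∧ r = Ic q cX cY cU - I2 p Prod.fst Prod.snd }
      ⊆ { r | ∃ (U : Type) (_ : Fintype U) (q : X × Y × U → ℝ), IsAux p q ∧
        r = Ic q cX cY cU - I2 p Prod.fst Prod.snd } := by
    rintro r ⟨U, iU, q, haux, hind, hr⟩
    exact ⟨U, iU, q, haux, hr⟩
  have h0P := zero_mem_PNI p hp
  have h0N := hPsubN h0P
  have hbddP := hbddN.mono hPsubN
  have hPgeq : 0 ≤ GPNI p := le_csSup hbddP h0P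
  have hNgeq : 0 ≤ GNNI p := le_csSup hbddN h0N
  constructor
  · intro hP0
    have hstar : StarP p := by
      by_contra hns
      obtain ⟨r, hrmem, hrpos⟩ := not_star_pos p hp hns
      have hle : r ≤ GPNI p := le_csSup hbddP hrmem
      rw [hP0] at hle
      linarith
    have hle : GNNI p ≤ 0 := by
      refine csSup_le ⟨0, h0N⟩ fun r hr => ?_
      obtain ⟨U, iU, q, haux, rfl⟩ := hr
      exact star_Ic_le p hp hstar q haux
    linarith
  · intro hN0
    have hle : GPNI p ≤ GNNI p := csSup_le_csSup hbddN ⟨0, h0P⟩ hPsubN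
    rw [hN0] at hle
    linarith

end GW
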